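/- Let H be a locally compact Hausdorff group acting continuously and properly on the right on a locally compact Hausdorff space X, and let λ be a positive Radon measure on X. Then for all continuous compactly supported functions f, g : X → ℂ, the function η ↦ ∫_X conj(f(x)) g(x·η) dλ(x) on H is continuous and has compact support. -/

import Mathlib

open MeasureTheory MulOpposite Filter Topology

/-- for a continuous proper right action of a locally compact Hausdorff
group `H` on a locally compact Hausdorff space `X` carrying a positive Radon measure
`λ`, and `f, g ∈ C_c(X)`, the function `η ↦ ∫ conj(f(x)) g(x·η) dλ(x)` belongs to
`C_c(H)`: it is continuous and compactly supported. -/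
theorem inner_product_mem_Cc
    {H X : Type*}
    [Group H] [TopologicalSpace H] [IsTopologicalGroup H]
    [LocallyCompactSpace H] [T2Space H]
    [TopologicalSpace X] [LocallyCompactSpace X] [T2Space X]
    [MulAction Hᵐᵒᵖ X] [ContinuousSMul Hᵐᵒᵖ X]
    [MeasurableSpace X] [BorelSpace X]
    (hproper : IsProperMap (fun p : X × H => (p.1, op p.2 • p.1)))
    (lam : Measure X) [lam.Regular]
    (f g : X → ℂ) (hf : Continuous f) (hfc : HasCompactSupport f)
    (hg : Continuous g) (hgc : HasCompactSupport g) :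
    Continuous (fun η : H => ∫ x, (starRingEnd ℂ) (f x) * g (op η • x) ∂lam) ∧
    HasCompactSupport (fun η : H => ∫ x, (starRingEnd ℂ) (f x) * g (op η • x) ∂lam) := by
  have hfi : Integrable f lam := hf.integrable_of_hasCompactSupport hfc
  have hsmul : ∀ η : H, Continuous (fun x : X => op η • x) := fun η =>
    continuous_const.smul continuous_id
  have hcont : ∀ η : H, Continuous (fun x => (starRingEnd ℂ) (f x) * g (op η • x)) := fun η =>
    ((Complex.continuous_conj.comp hf).mul (hg.comp (hsmul η)))
  have hcs : ∀ η : H, HasCompactSupport (fun x => (starRingEnd ℂ) (f x) * g (op η • x)) := by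
    intro η
    exact (hfc.comp_left (map_zero _)).mul_right
  have hint : ∀ η : H, Integrable (fun x => (starRingEnd ℂ) (f x) * g (op η • x)) lam :=
    fun η => (hcont η).integrable_of_hasCompactSupport (hcs η)
  constructor
  · set K := tsupport f with hK
    have hKc : IsCompact K := hfc
    haveI : CompactSpace K := isCompact_iff_compactSpace.mp hKc
    set Gk : C(H × K, ℂ) :=
      ⟨fun p => g (op p.1 • (p.2 : X)),
        by
          apply hg.comp
          exact (MulOpposite.continuous_op.comp continuous_fst).smul
            (continuous_subtype_val.comp continuous_snd)⟩ with hGk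
    rw [continuous_iff_continuousAt]
    intro η₀
    rw [ContinuousAt, Metric.tendsto_nhds]
    intro ε hε
    set I := ∫ x, ‖f x‖ ∂lam with hI
    have hInn : 0 ≤ I := integral_nonneg fun x => norm_nonneg _
    set ε' := ε / (2 * (I + 1)) with hε'
    have hε'pos : 0 < ε' := by positivity
    have hGnear : ∀ᶠ η in 𝓝 η₀, dist (Gk.curry η) (Gk.curry η₀) < ε' :=
      (Metric.tendsto_nhds.mp (Gk.curry.continuous.tendsto η₀)) ε' hε'pos
    filter_upwards [hGnear] with η hη
    have key : ∀ x : X, ‖(starRingEnd ℂ) (f x) * g (op η • x) -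
        (starRingEnd ℂ) (f x) * g (op η₀ • x)‖ ≤ ‖f x‖ * ε' := by
      intro x
      rw [← mul_sub, norm_mul, RCLike.norm_conj]
      by_cases hx : x ∈ K
      · refine mul_le_mul_of_nonneg_left ?_ (norm_nonneg _)
        have h1 := ContinuousMap.dist_apply_le_dist (f := Gk.curry η) (g := Gk.curry η₀)
          (⟨x, hx⟩ : K)
        have h2 : dist (Gk.curry η ⟨x, hx⟩) (Gk.curry η₀ ⟨x, hx⟩) =
            ‖g (op η • x) - g (op η₀ • x)‖ := by
          simp only [ContinuousMap.curry_apply, hGk, ContinuousMap.coe_mk, dist_eq_norm]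
        rw [h2] at h1
        exact h1.trans hη.le
      · have hfx : f x = 0 := image_eq_zero_of_notMem_tsupport hx
        simp [hfx]
    rw [dist_eq_norm, ← integral_sub (hint η) (hint η₀)]
    have hb : ‖∫ x, ((starRingEnd ℂ) (f x) * g (op η • x) -
        (starRingEnd ℂ) (f x) * g (op η₀ • x)) ∂lam‖ ≤ ∫ x, ‖f x‖ * ε' ∂lam :=
      norm_integral_le_of_norm_le (hfi.norm.mul_const ε') (ae_of_all _ key)
    have heq : ∫ x, ‖f x‖ * ε' ∂lam = I * ε' := integral_mul_const _ _
    have hfin : (I + 1) * ε' = ε / 2 := by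
      rw [hε']
      field_simp
    have : I * ε' ≤ (I + 1) * ε' :=
      mul_le_mul_of_nonneg_right (by linarith) hε'pos.le
    calc ‖∫ x, ((starRingEnd ℂ) (f x) * g (op η • x) -
          (starRingEnd ℂ) (f x) * g (op η₀ • x)) ∂lam‖
        ≤ I * ε' := hb.trans_eq heq
      _ ≤ (I + 1) * ε' := this
      _ = ε / 2 := hfin
      _ < ε := by linarith
  · set S := Prod.snd '' ((fun p : X × H => (p.1, op p.2 • p.1)) ⁻¹'
      (tsupport f ×ˢ tsupport g)) with hS
    have hScomp : IsCompact S :=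
      ((hproper.isCompact_preimage (hfc.prod hgc)).image continuous_snd)
    apply HasCompactSupport.intro hScomp
    intro η hη
    apply integral_eq_zero_of_ae
    filter_upwards with x
    by_cases hx : f x = 0
    · simp [hx]
    · have hxg : g (op η • x) = 0 := by
        by_contra hgx
        exact hη ⟨(x, η), ⟨subset_tsupport f hx, subset_tsupport g hgx⟩, rfl⟩
      simp [hxg]
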